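/- arXiv:1908.07664 — 2 statements merged into one kernel-verified Lean document; each statement's English description precedes it below -/
import Mathlib

section
/- Let Γ be a finite simple graph with vertex set V = {1, …, n} and let X ⊆ V be a clique of Γ. Then X is retractive in P_Γ: the restriction of the quotient map ρ_X : P_Γ → P_X to the subgroup of P_Γ generated by {a_{ij} : i < j, {i,j} ⊆ X} is injective. -/
abbrev PBIdx (n : ℕ) : Type := {p : Fin n × Fin n // p.1 < p.2}

namespace GraphicBraid

open scoped commutatorElement

def ofIdx {n : ℕ} {i j : Fin n} (h : i < j) : FreeGroup (PBIdx n) :=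
  FreeGroup.of ⟨(i, j), h⟩

/-- The Artin relators for the pure braid group `P_n`. -/
def pureBraidRels (n : ℕ) : Set (FreeGroup (PBIdx n)) :=
  {w | ∃ (i j r s : Fin n) (hij : i < j) (hrs : r < s),
      (s < i ∨ (i < r ∧ s < j)) ∧ w = ⁅ofIdx hij, ofIdx hrs⁆} ∪
  {w | ∃ (r i s j : Fin n) (hri : r < i) (his : i < s) (hsj : s < j),
      w = ⁅ofIdx (his.trans hsj), ofIdx hsj * ofIdx (hri.trans his) * (ofIdx hsj)⁻¹⁆} ∪
  {w | ∃ (i j r : Fin n) (hij : i < j) (hjr : j < r),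
      w = ⁅ofIdx hij * ofIdx (hij.trans hjr), ofIdx hjr⁆ ∨
      w = ⁅ofIdx hij, ofIdx (hij.trans hjr) * ofIdx hjr⁆}

/-- Relators killing the generators corresponding to non-edges of `Γ`. -/
def nonEdgeRels {n : ℕ} (Γ : SimpleGraph (Fin n)) : Set (FreeGroup (PBIdx n)) :=
  {w | ∃ p : PBIdx n, ¬ Γ.Adj p.1.1 p.1.2 ∧ w = FreeGroup.of p}

def graphicRels {n : ℕ} (Γ : SimpleGraph (Fin n)) : Set (FreeGroup (PBIdx n)) :=
  pureBraidRels n ∪ nonEdgeRels Γ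

/-- The graphic pure braid group `P_Γ`. -/
abbrev GPB {n : ℕ} (Γ : SimpleGraph (Fin n)) : Type := PresentedGroup (graphicRels Γ)

/-- The image of the Artin generator `a_{ij}` in `P_Γ`. -/
def agen {n : ℕ} (Γ : SimpleGraph (Fin n)) {i j : Fin n} (h : i < j) : GPB Γ :=
  PresentedGroup.of (rels := graphicRels Γ) ⟨(i, j), h⟩

/-- Relators killing the generators `a_{ij}` with `{i,j} ⊄ X`. -/
def killRels {n : ℕ} (X : Set (Fin n)) : Set (FreeGroup (PBIdx n)) :=
  {w | ∃ p : PBIdx n, ¬ (p.1.1 ∈ X ∧ p.1.2 ∈ X) ∧ w = FreeGroup.of p}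

/-- The quotient `P_X` of `P_Γ` obtained by killing all generators `a_{ij}` with `{i,j} ⊄ X`. -/
abbrev GPBX {n : ℕ} (Γ : SimpleGraph (Fin n)) (X : Set (Fin n)) : Type :=
  PresentedGroup (graphicRels Γ ∪ killRels X)

/-- The canonical surjection between presented groups when the set of relators grows. -/
def quotMap {α : Type*} {R S : Set (FreeGroup α)} (h : R ⊆ S) :
    PresentedGroup R →* PresentedGroup S :=
  QuotientGroup.map _ _ (MonoidHom.id _)
    (fun _ hx => Subgroup.normalClosure_mono h hx)

/-- The quotient map `ρ_X : P_Γ → P_X`. -/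
def rho {n : ℕ} (Γ : SimpleGraph (Fin n)) (X : Set (Fin n)) : GPB Γ →* GPBX Γ X :=
  quotMap Set.subset_union_left

lemma killRels_anti {n : ℕ} {X Y : Set (Fin n)} (h : X ⊆ Y) : killRels Y ⊆ killRels X := by
  rintro w ⟨p, hp, rfl⟩
  exact ⟨p, fun hx => hp ⟨h hx.1, h hx.2⟩, rfl⟩

/-- The quotient map `P_Y → P_X` for `X ⊆ Y`. -/
def rhoDown {n : ℕ} (Γ : SimpleGraph (Fin n)) {X Y : Set (Fin n)} (h : X ⊆ Y) :
    GPBX Γ Y →* GPBX Γ X :=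
  quotMap (Set.union_subset_union_right _ (killRels_anti h))

/-- `X` is a maximal clique of `Γ`. -/
def MaxClique {n : ℕ} (Γ : SimpleGraph (Fin n)) (X : Set (Fin n)) : Prop :=
  Γ.IsClique X ∧ ∀ Y : Set (Fin n), Γ.IsClique Y → X ⊆ Y → Y = X


/-- The subgroup of `P_Γ` generated by the generators `a_{ij}` with `{i,j} ⊆ X`. -/
def cliqueSubgroup {n : ℕ} (Γ : SimpleGraph (Fin n)) (X : Set (Fin n)) : Subgroup (GPB Γ) :=
  Subgroup.closure {g : GPB Γ | ∃ p : PBIdx n, (p.1.1 ∈ X ∧ p.1.2 ∈ X) ∧ g = PresentedGroup.of p}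

/-- The bipartite incidence graph of edges and 3-cliques (triangles) of `Γ`. -/
def incidenceGraph {n : ℕ} (Γ : SimpleGraph (Fin n)) :
    SimpleGraph (Γ.edgeSet ⊕ {T : Finset (Fin n) // Γ.IsNClique 3 T}) where
  Adj x y :=
    match x, y with
    | Sum.inl e, Sum.inr T => ∀ v : Fin n, v ∈ (e : Sym2 (Fin n)) → v ∈ T.1
    | Sum.inr T, Sum.inl e => ∀ v : Fin n, v ∈ (e : Sym2 (Fin n)) → v ∈ T.1
    | _, _ => False
  symm := ⟨by rintro (e | T) (f | S) h <;> exact h⟩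
  loopless := ⟨by rintro (e | T) h <;> exact h⟩


open Classical in
/-- The candidate section on generators: `a_{ij} ↦ a_{ij}` if `{i,j} ⊆ X`, else `1`. -/
noncomputable def secFun {n : ℕ} (Γ : SimpleGraph (Fin n)) (X : Set (Fin n)) :
    PBIdx n → GPB Γ :=
  fun p => if p.1.1 ∈ X ∧ p.1.2 ∈ X then PresentedGroup.of (rels := graphicRels Γ) p else 1

lemma rel_eq_one {n : ℕ} {Γ : SimpleGraph (Fin n)} {r : FreeGroup (PBIdx n)}
    (h : r ∈ graphicRels Γ) :
    (QuotientGroup.mk' (Subgroup.normalClosure (graphicRels Γ))) r = 1 :=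
  (QuotientGroup.eq_one_iff r).mpr (Subgroup.subset_normalClosure h)

lemma secFun_kills {n : ℕ} (Γ : SimpleGraph (Fin n)) (X : Set (Fin n)) (hX : Γ.IsClique X) :
    ∀ r ∈ graphicRels Γ ∪ killRels X, FreeGroup.lift (secFun Γ X) r = 1 := by
  classical
  have hmk : ∀ w ∈ graphicRels Γ,
      (QuotientGroup.mk' (Subgroup.normalClosure (graphicRels Γ))) w = 1 :=
    fun w hw => rel_eq_one hw
  rintro r (hr | hr)
  · rcases hr with ((⟨i, j, rr, s, hij, hrs, hcond, rfl⟩ | ⟨rr, i, s, j, hri, his, hsj, rfl⟩) |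
        ⟨i, j, rr, hij, hjr, hw⟩) | ⟨p, hp, rfl⟩
    · -- commuting relators
      rw [map_commutatorElement]
      by_cases h1 : i ∈ X ∧ j ∈ X
      · by_cases h2 : rr ∈ X ∧ s ∈ X
        · have := hmk _ (Or.inl (Or.inl (Or.inl ⟨i, j, rr, s, hij, hrs, hcond, rfl⟩)))
          simp only [ofIdx, map_commutatorElement, QuotientGroup.mk'_apply] at this
          simp [secFun, h1, h2, ofIdx, FreeGroup.lift_apply_of, PresentedGroup.of]
          exact this
        · simp [ofIdx, secFun, h2]
      · simp [ofIdx, secFun, h1]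
    · -- conjugation relators, rr < i < s < j
      rw [map_commutatorElement]
      by_cases h1 : i ∈ X ∧ j ∈ X
      · by_cases h2 : s ∈ X
        · by_cases h3 : rr ∈ X
          · have := hmk _ (Or.inl (Or.inl (Or.inr ⟨rr, i, s, j, hri, his, hsj, rfl⟩)))
            simp only [ofIdx, map_commutatorElement, QuotientGroup.mk'_apply] at this
            simp [secFun, h1, h2, h3, ofIdx, FreeGroup.lift_apply_of, PresentedGroup.of,
              and_true, h1.2]
            exact this
          · have hy : FreeGroup.lift (secFun Γ X)
                (ofIdx hsj * ofIdx (hri.trans his) * (ofIdx hsj)⁻¹) =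
                FreeGroup.lift (secFun Γ X) (ofIdx hsj) * 1 *
                  (FreeGroup.lift (secFun Γ X) (ofIdx hsj))⁻¹ := by
              simp [ofIdx, secFun, h3]
            rw [hy, mul_one, mul_inv_cancel, commutatorElement_one_right]
        · have hy : FreeGroup.lift (secFun Γ X)
              (ofIdx hsj * ofIdx (hri.trans his) * (ofIdx hsj)⁻¹) = 1 := by
            simp [ofIdx, secFun, h2]
          rw [hy, commutatorElement_one_right]
      · have hx : FreeGroup.lift (secFun Γ X) (ofIdx (his.trans hsj)) = 1 := by
          simp [ofIdx, secFun, h1]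
        rw [hx, commutatorElement_one_left]
    · -- braid-type relators, i < j < rr
      by_cases h1 : i ∈ X <;> by_cases h2 : j ∈ X <;> by_cases h3 : rr ∈ X
      · rcases hw with rfl | rfl
        · have := hmk _ (Or.inl (Or.inr ⟨i, j, rr, hij, hjr, Or.inl rfl⟩))
          simp only [ofIdx, map_commutatorElement, QuotientGroup.mk'_apply] at this
          rw [map_commutatorElement]
          simp [secFun, h1, h2, h3, ofIdx, FreeGroup.lift_apply_of, PresentedGroup.of]
          exact this
        · have := hmk _ (Or.inl (Or.inr ⟨i, j, rr, hij, hjr, Or.inr rfl⟩))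
          simp only [ofIdx, map_commutatorElement, QuotientGroup.mk'_apply] at this
          rw [map_commutatorElement]
          simp [secFun, h1, h2, h3, ofIdx, FreeGroup.lift_apply_of, PresentedGroup.of]
          exact this
      all_goals
        rcases hw with rfl | rfl <;>
        · rw [map_commutatorElement]
          simp [ofIdx, secFun, h1, h2, h3]
    · -- non-edge relators
      have hnot : ¬ (p.1.1 ∈ X ∧ p.1.2 ∈ X) := by
        rintro ⟨ha, hb⟩
        exact hp (hX ha hb (ne_of_lt p.2))
      simp [secFun, hnot]
  · -- killRels
    rcases hr with ⟨p, hp, rfl⟩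
    simp [secFun, hp]

/-- The section `P_X → P_Γ` on the clique subgroup. -/
noncomputable def sec {n : ℕ} (Γ : SimpleGraph (Fin n)) (X : Set (Fin n))
    (hX : Γ.IsClique X) : GPBX Γ X →* GPB Γ :=
  PresentedGroup.toGroup (secFun_kills Γ X hX)

lemma rho_of {n : ℕ} (Γ : SimpleGraph (Fin n)) (X : Set (Fin n)) (p : PBIdx n) :
    rho Γ X (PresentedGroup.of (rels := graphicRels Γ) p) =
      PresentedGroup.of (rels := graphicRels Γ ∪ killRels X) p := rfl

lemma sec_rho {n : ℕ} (Γ : SimpleGraph (Fin n)) (X : Set (Fin n)) (hX : Γ.IsClique X)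
    {g : GPB Γ} (hg : g ∈ cliqueSubgroup Γ X) : sec Γ X hX (rho Γ X g) = g := by
  induction hg using Subgroup.closure_induction with
  | mem x hx =>
      obtain ⟨p, hp, rfl⟩ := hx
      rw [rho_of]
      simp [sec, secFun, hp]
  | one => simp
  | mul x y _ _ hx hy => simp [map_mul, hx, hy]
  | inv x _ hx => simp [map_inv, hx]


/-- A clique `X` of `Γ` is retractive in `P_Γ`: the restriction of
`ρ_X : P_Γ → P_X` to the subgroup generated by the `a_{ij}` with `{i,j} ⊆ X` is injective. -/
theorem clique_retractive {n : ℕ} (Γ : SimpleGraph (Fin n)) (X : Set (Fin n))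
    (hX : Γ.IsClique X) :
    Set.InjOn (rho Γ X) (cliqueSubgroup Γ X : Set (GPB Γ)) := by
  intro a ha b hb hab
  have := congrArg (sec Γ X hX) hab
  rwa [sec_rho Γ X hX ha, sec_rho Γ X hX hb] at this

end GraphicBraid
end

section
/- Let Γ be a finite simple graph with vertex set V = {1, …, n}. Suppose {i,j} and {r,s} are edges of Γ such that no clique of Γ contains {i,j} ∪ {r,s} (equivalently, the pair {a_{ij}, a_{rs}} is transverse to the family 𝒳(Γ) of maximal cliques). Then [a_{ij}, a_{rs}] = 1 in P_Γ. -/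
namespace GraphicBraid

open scoped commutatorElement

section Aux

variable {n : ℕ} (Γ : SimpleGraph (Fin n))

lemma mk_rel_eq_one {w : FreeGroup (PBIdx n)} (h : w ∈ graphicRels Γ) :
    PresentedGroup.mk (graphicRels Γ) w = 1 := by
  have : w ∈ Subgroup.normalClosure (graphicRels Γ) := Subgroup.subset_normalClosure h
  exact (QuotientGroup.eq_one_iff w).mpr this

lemma mk_ofIdx {i j : Fin n} (h : i < j) :
    PresentedGroup.mk (graphicRels Γ) (ofIdx h) = agen Γ h := rfl

lemma agen_kill {i j : Fin n} (h : i < j) (hadj : ¬ Γ.Adj i j) : agen Γ h = 1 := by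
  have : FreeGroup.of (⟨(i, j), h⟩ : PBIdx n) ∈ graphicRels Γ :=
    Or.inr ⟨⟨(i, j), h⟩, hadj, rfl⟩
  exact mk_rel_eq_one Γ this

lemma rel1 {i j r s : Fin n} (hij : i < j) (hrs : r < s) (hc : s < i ∨ (i < r ∧ s < j)) :
    Commute (agen Γ hij) (agen Γ hrs) := by
  have hm : ⁅ofIdx hij, ofIdx hrs⁆ ∈ graphicRels Γ :=
    Or.inl (Or.inl (Or.inl ⟨i, j, r, s, hij, hrs, hc, rfl⟩))
  have h1 := mk_rel_eq_one Γ hm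
  rw [map_commutatorElement] at h1
  exact commutatorElement_eq_one_iff_commute.mp h1

lemma rel2 {r i s j : Fin n} (hri : r < i) (his : i < s) (hsj : s < j) :
    Commute (agen Γ (his.trans hsj)) (agen Γ hsj * agen Γ (hri.trans his) * (agen Γ hsj)⁻¹) := by
  have hm : ⁅ofIdx (his.trans hsj), ofIdx hsj * ofIdx (hri.trans his) * (ofIdx hsj)⁻¹⁆ ∈
      graphicRels Γ := Or.inl (Or.inl (Or.inr ⟨r, i, s, j, hri, his, hsj, rfl⟩))
  have h1 := mk_rel_eq_one Γ hm
  rw [map_commutatorElement, map_mul, map_mul, map_inv] at h1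
  exact commutatorElement_eq_one_iff_commute.mp h1

lemma rel3a {i j r : Fin n} (hij : i < j) (hjr : j < r) :
    Commute (agen Γ hij * agen Γ (hij.trans hjr)) (agen Γ hjr) := by
  have hm : ⁅ofIdx hij * ofIdx (hij.trans hjr), ofIdx hjr⁆ ∈ graphicRels Γ :=
    Or.inl (Or.inr ⟨i, j, r, hij, hjr, Or.inl rfl⟩)
  have h1 := mk_rel_eq_one Γ hm
  rw [map_commutatorElement, map_mul] at h1
  exact commutatorElement_eq_one_iff_commute.mp h1

lemma rel3b {i j r : Fin n} (hij : i < j) (hjr : j < r) :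
    Commute (agen Γ hij) (agen Γ (hij.trans hjr) * agen Γ hjr) := by
  have hm : ⁅ofIdx hij, ofIdx (hij.trans hjr) * ofIdx hjr⁆ ∈ graphicRels Γ :=
    Or.inl (Or.inr ⟨i, j, r, hij, hjr, Or.inr rfl⟩)
  have h1 := mk_rel_eq_one Γ hm
  rw [map_commutatorElement, map_mul] at h1
  exact commutatorElement_eq_one_iff_commute.mp h1

lemma conj_cancel {G : Type*} [Group G] {A B c : G}
    (h1 : Commute A (c * B * c⁻¹)) (h2 : Commute A c) : Commute A B := by
  have h3 : Commute A (c⁻¹ * (c * B * c⁻¹) * c) := (h2.inv_right.mul_right h1).mul_right h2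
  have he : c⁻¹ * (c * B * c⁻¹) * c = B := by group
  rwa [he] at h3

/-- Core lemma: linked configuration `w < x < y < z` with one cross generator killed. -/
lemma core {w x y z : Fin n} (hwx : w < x) (hxy : x < y) (hyz : y < z)
    (hk : agen Γ hwx = 1 ∨ agen Γ (hwx.trans (hxy.trans hyz)) = 1 ∨
          agen Γ hxy = 1 ∨ agen Γ hyz = 1) :
    Commute (agen Γ (hxy.trans hyz)) (agen Γ (hwx.trans hxy)) := by
  set A := agen Γ (hxy.trans hyz) with hA
  set B := agen Γ (hwx.trans hxy) with hB
  set ayz := agen Γ hyz with hayz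
  set awz := agen Γ (hwx.trans (hxy.trans hyz)) with hawz
  set axy := agen Γ hxy with haxy
  set awx := agen Γ hwx with hawx
  have h2 : Commute A (ayz * B * ayz⁻¹) := rel2 Γ hwx hxy hyz
  -- rewrite the conjugate using the triple (w,y,z)
  have h3b : Commute B (awz * ayz) := by
    exact rel3b Γ (hwx.trans hxy) hyz
  have hD : ayz * B * ayz⁻¹ = awz⁻¹ * B * awz := by
    have h' : awz * ayz * B = B * (awz * ayz) := h3b.symm.eq
    calc ayz * B * ayz⁻¹ = awz⁻¹ * (awz * ayz * B) * ayz⁻¹ := by group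
      _ = awz⁻¹ * (B * (awz * ayz)) * ayz⁻¹ := by rw [h']
      _ = awz⁻¹ * B * awz := by group
  have h2' : Commute A (awz⁻¹ * B * awz) := hD ▸ h2
  rcases hk with hk | hk | hk | hk
  · -- a_{wx} = 1 : from triple (w,x,z), A commutes with awz
    have h3a : Commute (awx * awz) A := by
      exact rel3a Γ hwx (hxy.trans hyz)
    rw [hk, one_mul] at h3a
    have hAc : Commute A awz⁻¹ := h3a.symm.inv_right
    have : Commute A (awz⁻¹ * B * (awz⁻¹)⁻¹) := by rwa [inv_inv]
    exact conj_cancel this hAc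
  · -- a_{wz} = 1
    rw [hk] at h2'
    simpa using h2'
  · -- a_{xy} = 1 : from triple (x,y,z), A commutes with ayz
    have h3a : Commute (axy * A) ayz := rel3a Γ hxy hyz
    rw [hk, one_mul] at h3a
    exact conj_cancel h2 h3a
  · -- a_{yz} = 1
    rw [hk] at h2
    simpa using h2

end Aux

/-- If `{i,j}` and `{r,s}` are edges of `Γ` such that no clique of `Γ`
contains `{i,j} ∪ {r,s}`, then `[a_{ij}, a_{rs}] = 1` in `P_Γ`. -/
theorem transverse_commute {n : ℕ} (Γ : SimpleGraph (Fin n)) {i j r s : Fin n}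
    (hij : i < j) (hrs : r < s) (eij : Γ.Adj i j) (ers : Γ.Adj r s)
    (htrans : ∀ C : Set (Fin n), Γ.IsClique C → ¬ (({i, j, r, s} : Set (Fin n)) ⊆ C)) :
    ⁅agen Γ hij, agen Γ hrs⁆ = 1 := by
  rw [commutatorElement_eq_one_iff_commute]
  have hG : ¬ ((i = r ∨ Γ.Adj i r) ∧ (i = s ∨ Γ.Adj i s) ∧
      (j = r ∨ Γ.Adj j r) ∧ (j = s ∨ Γ.Adj j s)) := by
    rintro ⟨h1, h2, h3, h4⟩
    refine htrans {i, j, r, s} ?_ (subset_refl _)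
    intro x hx y hy hxy
    simp only [Set.mem_insert_iff, Set.mem_singleton_iff] at hx hy
    rcases hx with rfl | rfl | rfl | rfl <;> rcases hy with rfl | rfl | rfl | rfl <;>
      first
        | exact absurd rfl hxy
        | exact eij | exact eij.symm | exact ers | exact ers.symm
        | exact h1.resolve_left hxy
        | exact (h1.resolve_left (fun e => hxy e.symm)).symm
        | exact h2.resolve_left hxy
        | exact (h2.resolve_left (fun e => hxy e.symm)).symm
        | exact h3.resolve_left hxy
        | exact (h3.resolve_left (fun e => hxy e.symm)).symm
        | exact h4.resolve_left hxy
        | exact (h4.resolve_left (fun e => hxy e.symm)).symm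
  rcases lt_trichotomy j r with hjr | hjr | hjr
  · -- j < r : disjoint, a_{rs} swallows : rel1 swapped
    exact (rel1 Γ hrs hij (Or.inl hjr)).symm
  · -- j = r
    subst hjr
    have hkis : ¬ Γ.Adj i s := fun h =>
      hG ⟨Or.inr eij, Or.inr h, Or.inl rfl, Or.inr ers⟩
    have h1 : agen Γ (hij.trans hrs) = 1 := agen_kill Γ _ hkis
    have := rel3b Γ hij hrs
    rw [h1, one_mul] at this
    exact this
  · -- r < j
    rcases lt_trichotomy s i with hsi | hsi | hsi
    · exact rel1 Γ hij hrs (Or.inl hsi)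
    · -- s = i
      subst hsi
      have hkrj : ¬ Γ.Adj r j := fun h =>
        hG ⟨Or.inr ers.symm, Or.inl rfl, Or.inr h.symm, Or.inr eij.symm⟩
      have h1 : agen Γ (hrs.trans hij) = 1 := agen_kill Γ _ hkrj
      have := rel3b Γ hrs hij
      rw [h1, one_mul] at this
      exact this.symm
    · -- i < s and r < j
      rcases lt_trichotomy i r with hir | hir | hir
      · -- i < r
        rcases lt_trichotomy j s with hjs | hjs | hjs
        · -- i < r < j < s : linked, use core with (w,x,y,z) = (i,r,j,s)
          refine (core Γ hir hjr hjs ?_).symm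
          rcases not_and_or.mp hG with h | h
          · exact Or.inl (agen_kill Γ _ (fun a => (h (Or.inr a)).elim))
          rcases not_and_or.mp h with h | h
          · exact Or.inr (Or.inl (agen_kill Γ _ (fun a => (h (Or.inr a)).elim)))
          rcases not_and_or.mp h with h | h
          · exact Or.inr (Or.inr (Or.inl
              (agen_kill Γ _ (fun a => (h (Or.inr a.symm)).elim))))
          · exact Or.inr (Or.inr (Or.inr (agen_kill Γ _ (fun a => (h (Or.inr a)).elim))))
        · -- j = s
          subst hjs
          have hkir : ¬ Γ.Adj i r := fun h =>
            hG ⟨Or.inr h, Or.inr eij, Or.inr ers.symm, Or.inl rfl⟩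
          have h1 : agen Γ hir = 1 := agen_kill Γ _ hkir
          have := rel3a Γ hir hrs
          rw [h1, one_mul] at this
          exact this
        · -- s < j : nested i < r < s < j
          exact rel1 Γ hij hrs (Or.inr ⟨hir, hjs⟩)
      · -- i = r
        subst hir
        rcases lt_trichotomy j s with hjs | hjs | hjs
        · -- i=r, j < s : kill {j,s}
          have hkjs : ¬ Γ.Adj j s := fun h =>
            hG ⟨Or.inl rfl, Or.inr ers, Or.inr eij.symm, Or.inr h⟩
          have h1 : agen Γ hjs = 1 := agen_kill Γ _ hkjs
          have := rel3b Γ hij hjs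
          rw [h1, mul_one] at this
          exact this
        · subst hjs; exact Commute.refl _
        · -- i = r, s < j : kill {s,j}
          have hksj : ¬ Γ.Adj s j := fun h =>
            hG ⟨Or.inl rfl, Or.inr ers, Or.inr eij.symm, Or.inr h.symm⟩
          have h1 : agen Γ hjs = 1 := agen_kill Γ _ hksj
          have := rel3b Γ hrs hjs
          rw [h1, mul_one] at this
          exact this.symm
      · -- r < i
        rcases lt_trichotomy j s with hjs | hjs | hjs
        · -- r < i, j < s : nested swapped
          exact (rel1 Γ hrs hij (Or.inr ⟨hir, hjs⟩)).symm
        · -- j = s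
          subst hjs
          have hkri : ¬ Γ.Adj r i := fun h =>
            hG ⟨Or.inr h.symm, Or.inr eij, Or.inr ers.symm, Or.inl rfl⟩
          have h1 : agen Γ hir = 1 := agen_kill Γ _ hkri
          have := rel3a Γ hir hij
          rw [h1, one_mul] at this
          exact this.symm
        · -- r < i < s < j : linked, core with (w,x,y,z) = (r,i,s,j)
          refine core Γ hir hsi hjs ?_
          rcases not_and_or.mp hG with h | h
          · exact Or.inl (agen_kill Γ _ (fun a => (h (Or.inr a.symm)).elim))
          rcases not_and_or.mp h with h | h
          · exact Or.inr (Or.inr (Or.inl (agen_kill Γ _ (fun a => (h (Or.inr a)).elim))))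
          rcases not_and_or.mp h with h | h
          · exact Or.inr (Or.inl (agen_kill Γ _ (fun a => (h (Or.inr a.symm)).elim)))
          · exact Or.inr (Or.inr (Or.inr (agen_kill Γ _ (fun a => (h (Or.inr a.symm)).elim))))

end GraphicBraid
end
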